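/- Let f : ℂ → ℂ be a complex polynomial with f(0) = 0 of multiplicity k ≥ 2 at the origin, let a, b, t ∈ ℝ with t ≠ 0 and (a,b) ≠ (0,0), and set G_t(z) = −2i(f'(z))² conj(f''(z)) + 2ti(a+ib) f''(z) conj(f'(z)). Then the origin is an isolated zero of G_t, and the winding number of G_t/|G_t| on a sufficiently small circle around the origin equals −1. -/

import Mathlib

open Complex Real

noncomputable section

/-- `G_t(z) = −2i(f'(z))² conj(f''(z)) + 2ti(a+ib) f''(z) conj(f'(z))`. -/
def Gt (f : Polynomial ℂ) (a b t : ℝ) (z : ℂ) : ℂ :=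
  -2 * Complex.I * (f.derivative.eval z) ^ 2 * (starRingEnd ℂ) (f.derivative.derivative.eval z) +
    2 * t * Complex.I * (a + Complex.I * b) * f.derivative.derivative.eval z *
      (starRingEnd ℂ) (f.derivative.eval z)

namespace WindingAux

/-- The dominant factor. -/
def Bfun (h m : Polynomial ℂ) (a b t : ℝ) (z : ℂ) : ℂ :=
  2 * t * Complex.I * ((a : ℂ) + Complex.I * b) * m.eval z * (starRingEnd ℂ) (h.eval z)

/-- The error term. -/
def Afun (h m : Polynomial ℂ) (j : ℕ) (z : ℂ) : ℂ :=
  -2 * Complex.I * z ^ (j + 2) * (h.eval z) ^ 2 * (starRingEnd ℂ) (m.eval z)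

def Wfun (h m : Polynomial ℂ) (j : ℕ) (a b t : ℝ) (z : ℂ) : ℂ :=
  Bfun h m a b t z + Afun h m j z / (starRingEnd ℂ) z

def ψ (h m : Polynomial ℂ) (j : ℕ) (a b t : ℝ) (z : ℂ) : ℝ :=
  ‖Bfun h m a b t z - Bfun h m a b t 0‖ +
    2 * ‖z‖ ^ (j + 1) * ‖h.eval z‖ ^ 2 * ‖m.eval z‖

lemma continuous_Bfun (h m : Polynomial ℂ) (a b t : ℝ) : Continuous (Bfun h m a b t) := by
  show Continuous fun z =>
    2 * (t : ℂ) * Complex.I * ((a : ℂ) + Complex.I * b) * m.eval z * (starRingEnd ℂ) (h.eval z)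
  simp only [starRingEnd_apply]
  exact (continuous_const.mul m.continuous).mul h.continuous.star

lemma continuous_Afun (h m : Polynomial ℂ) (j : ℕ) : Continuous (Afun h m j) := by
  show Continuous fun z =>
    -2 * Complex.I * z ^ (j + 2) * (h.eval z) ^ 2 * (starRingEnd ℂ) (m.eval z)
  simp only [starRingEnd_apply]
  exact (((continuous_const.mul (continuous_pow _)).mul (h.continuous.pow 2)).mul
    m.continuous.star)

lemma continuous_psi (h m : Polynomial ℂ) (j : ℕ) (a b t : ℝ) :
    Continuous (ψ h m j a b t) := by
  apply Continuous.add
  · exact continuous_norm.comp ((continuous_Bfun h m a b t).sub continuous_const)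
  · exact (((continuous_const.mul ((continuous_norm.pow _))).mul
      ((continuous_norm.comp h.continuous).pow 2)).mul
      (continuous_norm.comp m.continuous))

lemma psi_zero (h m : Polynomial ℂ) (j : ℕ) (a b t : ℝ) : ψ h m j a b t 0 = 0 := by
  simp [ψ]

lemma Gt_eq (f h m : Polynomial ℂ) (j : ℕ) (a b t : ℝ)
    (h1 : f.derivative = Polynomial.X ^ (j + 1) * h)
    (h2 : f.derivative.derivative = Polynomial.X ^ j * m) (z : ℂ) :
    Gt f a b t z = (z * (starRingEnd ℂ) z) ^ j *
      (Afun h m j z + (starRingEnd ℂ) z * Bfun h m a b t z) := by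
  rw [Gt, h2, h1]
  simp only [Polynomial.eval_mul, Polynomial.eval_pow, Polynomial.eval_X, map_mul, map_pow,
    Afun, Bfun]
  ring

lemma abs_Afun_div (h m : Polynomial ℂ) (j : ℕ) {z : ℂ} (hz : z ≠ 0) :
    ‖Afun h m j z / (starRingEnd ℂ) z‖ =
      2 * ‖z‖ ^ (j + 1) * ‖h.eval z‖ ^ 2 * ‖m.eval z‖ := by
  have hz' : ‖z‖ ≠ 0 := norm_ne_zero_iff.mpr hz
  rw [norm_div, Complex.norm_conj]
  simp only [Afun, norm_mul, norm_pow, Complex.norm_conj]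
  simp only [norm_neg, Complex.norm_two, Complex.norm_I, mul_one]
  rw [pow_succ (‖z‖) (j+1)]
  field_simp

lemma re_pos_of_abs_sub_one_lt {u : ℂ} (h : ‖u - 1‖ < 1) : 0 < u.re := by
  have h1 : |(u - 1).re| ≤ ‖u - 1‖ := Complex.abs_re_le_norm _
  have h2 : (u - 1).re = u.re - 1 := by simp
  rw [h2] at h1
  have := abs_lt.mp (lt_of_le_of_lt h1 h)
  linarith [this.1]

end WindingAux

open WindingAux

theorem winding_of_Gt_at_origin (f : Polynomial ℂ) (hf : f ≠ 0) (k : ℕ) (hk : 2 ≤ k)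
    (h0 : f.eval 0 = 0) (hmult : f.rootMultiplicity 0 = k)
    (a b t : ℝ) (ht : t ≠ 0) (hab : (a, b) ≠ (0, 0)) :
    ∃ ε₀ : ℝ, 0 < ε₀ ∧ (∀ z : ℂ, z ≠ 0 → ‖z‖ < ε₀ → Gt f a b t z ≠ 0) ∧
      ∀ ε : ℝ, 0 < ε → ε < ε₀ →
        ∃ θ : ℝ → ℝ, Continuous θ ∧
          (∀ s : ℝ,
            Gt f a b t (circleMap 0 ε s) /
                (‖Gt f a b t (circleMap 0 ε s)‖ : ℂ) =
              Complex.exp (Complex.I * θ s)) ∧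
          θ (2 * π) - θ 0 = 2 * π * (-1 : ℝ) := by
  classical
  -- factor out the root
  obtain ⟨j, rfl⟩ : ∃ j, k = j + 2 := ⟨k - 2, by omega⟩
  obtain ⟨g, hg, hg0⟩ : ∃ g : Polynomial ℂ, f = Polynomial.X ^ (j + 2) * g ∧ g.eval 0 ≠ 0 := by
    have hd := Polynomial.pow_rootMultiplicity_dvd f 0
    rw [hmult] at hd
    simp only [map_zero, sub_zero] at hd
    obtain ⟨g, hgg⟩ := hd
    refine ⟨g, hgg, ?_⟩
    intro hg0
    have hxg : (Polynomial.X : Polynomial ℂ) ∣ g := by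
      have := (Polynomial.dvd_iff_isRoot (p := g) (a := 0)).2 hg0
      simpa using this
    obtain ⟨g', hg'⟩ := hxg
    have hdvd : (Polynomial.X : Polynomial ℂ) ^ (j + 2 + 1) ∣ f :=
      ⟨g', by rw [hgg, hg', pow_succ]; ring⟩
    have hnd := Polynomial.pow_rootMultiplicity_not_dvd hf (0 : ℂ)
    rw [hmult] at hnd
    simp only [map_zero, sub_zero] at hnd
    exact hnd hdvd
  set h : Polynomial ℂ := Polynomial.C ((j : ℂ) + 2) * g + Polynomial.X * g.derivative with hhdef
  set m : Polynomial ℂ := Polynomial.C ((j : ℂ) + 1) * h + Polynomial.X * h.derivative with hmdef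
  have hd1 : f.derivative = Polynomial.X ^ (j + 1) * h := by
    rw [hg, Polynomial.derivative_mul, Polynomial.derivative_X_pow, hhdef]
    push_cast
    ring
  have hd2 : f.derivative.derivative = Polynomial.X ^ j * m := by
    rw [hd1, Polynomial.derivative_mul, Polynomial.derivative_X_pow, hmdef]
    push_cast
    ring
  have hh0 : h.eval 0 ≠ 0 := by
    simp only [hhdef, Polynomial.eval_add, Polynomial.eval_mul, Polynomial.eval_C,
      Polynomial.eval_X, zero_mul, add_zero]
    intro hc
    rcases mul_eq_zero.mp hc with hc | hc
    · have h2 : ((j : ℂ) + 2) = ((j + 2 : ℕ) : ℂ) := by push_cast; ring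
      rw [h2] at hc
      exact Nat.cast_ne_zero.mpr (by omega) hc
    · exact hg0 hc
  have hm0 : m.eval 0 ≠ 0 := by
    simp only [hmdef, Polynomial.eval_add, Polynomial.eval_mul, Polynomial.eval_C,
      Polynomial.eval_X, zero_mul, add_zero]
    intro hc
    rcases mul_eq_zero.mp hc with hc | hc
    · have h2 : ((j : ℂ) + 1) = ((j + 1 : ℕ) : ℂ) := by push_cast; ring
      rw [h2] at hc
      exact Nat.cast_ne_zero.mpr (by omega) hc
    · exact hh0 hc
  have hab' : ((a : ℂ) + Complex.I * b) ≠ 0 := by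
    intro hc
    apply hab
    have hre := congrArg Complex.re hc
    have him := congrArg Complex.im hc
    simp at hre him
    simp [hre, him]
  have hB0 : Bfun h m a b t 0 ≠ 0 := by
    simp only [Bfun]
    apply mul_ne_zero
    apply mul_ne_zero
    apply mul_ne_zero
    apply mul_ne_zero
    apply mul_ne_zero
    · norm_num
    · exact_mod_cast Complex.ofReal_ne_zero.mpr ht
    · exact Complex.I_ne_zero
    · exact hab'
    · exact hm0
    · simpa using hh0
  have hB0abs : 0 < ‖Bfun h m a b t 0‖ := norm_pos_iff.mpr hB0
  -- choose ε₀
  have hev : ∀ᶠ z in nhds (0 : ℂ), ψ h m j a b t z < ‖Bfun h m a b t 0‖ := by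
    have hc : ContinuousAt (ψ h m j a b t) 0 := (continuous_psi h m j a b t).continuousAt
    have hlt : ψ h m j a b t 0 < ‖Bfun h m a b t 0‖ := by
      rw [psi_zero]; exact hB0abs
    exact hc.eventually_lt continuousAt_const hlt
  obtain ⟨ε₀, hε₀pos, hε₀⟩ := Metric.eventually_nhds_iff.mp hev
  have hball : ∀ z : ℂ, ‖z‖ < ε₀ → ψ h m j a b t z < ‖Bfun h m a b t 0‖ := by
    intro z hz
    apply hε₀
    simpa [Complex.dist_eq] using hz
  -- main estimate
  have hWest : ∀ z : ℂ, z ≠ 0 → ‖z‖ < ε₀ →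
      ‖Wfun h m j a b t z - Bfun h m a b t 0‖ < ‖Bfun h m a b t 0‖ := by
    intro z hz hzlt
    have h1 : Wfun h m j a b t z - Bfun h m a b t 0 =
        (Bfun h m a b t z - Bfun h m a b t 0) + Afun h m j z / (starRingEnd ℂ) z := by
      rw [Wfun]; ring
    calc ‖Wfun h m j a b t z - Bfun h m a b t 0‖
        ≤ ‖Bfun h m a b t z - Bfun h m a b t 0‖ +
            ‖Afun h m j z / (starRingEnd ℂ) z‖ := by
          rw [h1]; exact norm_add_le _ _
      _ = ψ h m j a b t z := by rw [abs_Afun_div h m j hz, ψ]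
      _ < _ := hball z hzlt
  have hWne : ∀ z : ℂ, z ≠ 0 → ‖z‖ < ε₀ → Wfun h m j a b t z ≠ 0 := by
    intro z hz hzlt hc
    have := hWest z hz hzlt
    rw [hc, zero_sub, norm_neg] at this
    exact lt_irrefl _ this
  have hGtW : ∀ z : ℂ, z ≠ 0 → Gt f a b t z =
      (z * (starRingEnd ℂ) z) ^ j * ((starRingEnd ℂ) z * Wfun h m j a b t z) := by
    intro z hz
    rw [Gt_eq f h m j a b t hd1 hd2 z]
    congr 1
    have hcz : (starRingEnd ℂ) z ≠ 0 := by simpa using hz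
    rw [Wfun]
    field_simp
    ring
  have hGtne : ∀ z : ℂ, z ≠ 0 → ‖z‖ < ε₀ → Gt f a b t z ≠ 0 := by
    intro z hz hzlt
    rw [hGtW z hz]
    apply mul_ne_zero
    · exact pow_ne_zero _ (mul_ne_zero hz (by simpa using hz))
    · exact mul_ne_zero (by simpa using hz) (hWne z hz hzlt)
  refine ⟨ε₀, hε₀pos, hGtne, ?_⟩
  intro ε hε hεlt
  have hεne : ε ≠ 0 := ne_of_gt hε
  -- properties along the circle
  set zc : ℝ → ℂ := fun s => circleMap 0 ε s with hzc
  have hzne : ∀ s, zc s ≠ 0 := fun s => circleMap_ne_center hεne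
  have habsz : ∀ s, ‖zc s‖ = ε := by
    intro s; rw [hzc]; simp [norm_circleMap_zero, abs_of_pos hε]
  have habslt : ∀ s, ‖zc s‖ < ε₀ := fun s => by rw [habsz]; exact hεlt
  set u : ℝ → ℂ := fun s => Wfun h m j a b t (zc s) / Bfun h m a b t 0 with hu
  have hu1 : ∀ s, ‖u s - 1‖ < 1 := by
    intro s
    have : u s - 1 = (Wfun h m j a b t (zc s) - Bfun h m a b t 0) / Bfun h m a b t 0 := by
      rw [hu]; field_simp
    rw [this, norm_div, div_lt_one hB0abs]
    exact hWest _ (hzne s) (habslt s)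
  have hure : ∀ s, 0 < (u s).re := fun s => re_pos_of_abs_sub_one_lt (hu1 s)
  have huslit : ∀ s, u s ∈ Complex.slitPlane := fun s => Or.inl (hure s)
  have hune : ∀ s, u s ≠ 0 := by
    intro s hc
    have := hure s
    rw [hc] at this
    simp at this
  -- continuity
  have hWcont : Continuous fun s => Wfun h m j a b t (zc s) := by
    have hzcont : Continuous zc := continuous_circleMap 0 ε
    have hconjcont : Continuous fun s => (starRingEnd ℂ) (zc s) := by
      simp only [starRingEnd_apply]; exact hzcont.star
    simp only [Wfun]
    apply Continuous.add
    · exact (continuous_Bfun h m a b t).comp hzcont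
    · exact ((continuous_Afun h m j).comp hzcont).div hconjcont
        (fun s => by simpa using hzne s)
  have hucont : Continuous u := hWcont.div_const _
  have hargcont : Continuous fun s => Complex.arg (u s) := by
    rw [continuous_iff_continuousAt]
    intro s
    exact (Complex.continuousAt_arg (huslit s)).comp hucont.continuousAt
  refine ⟨fun s => -s + Complex.arg (u s) + Complex.arg (Bfun h m a b t 0), ?_, ?_, ?_⟩
  · exact (continuous_neg.add hargcont).add continuous_const
  · -- the pointwise identity
    intro s
    set P : ℝ := (ε ^ 2) ^ j with hP
    have hPpos : 0 < P := by positivity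
    have hzz : zc s * (starRingEnd ℂ) (zc s) = ((ε ^ 2 : ℝ) : ℂ) := by
      rw [Complex.mul_conj, Complex.normSq_eq_norm_sq, habsz s]
    have hGtz : Gt f a b t (zc s) =
        (P : ℂ) * ((starRingEnd ℂ) (zc s) * Wfun h m j a b t (zc s)) := by
      rw [hGtW (zc s) (hzne s), hzz, hP]
      push_cast
      ring
    have habsGt : ‖Gt f a b t (zc s)‖ =
        P * ε * ‖Wfun h m j a b t (zc s)‖ := by
      rw [hGtz]
      rw [norm_mul, norm_mul, Complex.norm_conj, habsz s, Complex.norm_real,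
        Real.norm_of_nonneg hPpos.le]
      ring
    have hconj : (starRingEnd ℂ) (zc s) = (ε : ℂ) * Complex.exp (-(s : ℂ) * Complex.I) := by
      have hz : zc s = (ε : ℂ) * Complex.exp ((s : ℂ) * Complex.I) := by
        simp [hzc, circleMap]
      rw [hz, map_mul, ← Complex.exp_conj]
      simp [Complex.conj_ofReal]
    have hWz : Wfun h m j a b t (zc s) = u s * Bfun h m a b t 0 := by
      rw [hu]
      field_simp
    have habsW : ‖Wfun h m j a b t (zc s)‖ =
        ‖u s‖ * ‖Bfun h m a b t 0‖ := by
      rw [hWz, norm_mul]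
    have hGtne' : Gt f a b t (zc s) ≠ 0 := hGtne (zc s) (hzne s) (habslt s)
    have habsne : (‖Gt f a b t (zc s)‖ : ℂ) ≠ 0 :=
      Complex.ofReal_ne_zero.mpr (norm_ne_zero_iff.mpr hGtne')
    rw [div_eq_iff habsne]
    have key : (‖Gt f a b t (zc s)‖ : ℂ) *
        Complex.exp (Complex.I * ((-s + Complex.arg (u s) + Complex.arg (Bfun h m a b t 0) : ℝ) : ℂ)) =
        Gt f a b t (zc s) := by
      have eexp : Complex.exp (Complex.I *
            ((-s + Complex.arg (u s) + Complex.arg (Bfun h m a b t 0) : ℝ) : ℂ)) =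
          Complex.exp (-(s : ℂ) * Complex.I) *
            Complex.exp ((Complex.arg (u s) : ℂ) * Complex.I) *
            Complex.exp ((Complex.arg (Bfun h m a b t 0) : ℂ) * Complex.I) := by
        rw [← Complex.exp_add, ← Complex.exp_add]
        congr 1
        push_cast
        ring
      rw [habsGt, eexp]
      push_cast
      calc ((P : ℂ) * ε * (‖Wfun h m j a b t (zc s)‖ : ℂ)) *
            (Complex.exp (-(s : ℂ) * Complex.I) *
              Complex.exp ((Complex.arg (u s) : ℂ) * Complex.I) *
              Complex.exp ((Complex.arg (Bfun h m a b t 0) : ℂ) * Complex.I))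
          = (P : ℂ) * ((ε : ℂ) * Complex.exp (-(s : ℂ) * Complex.I)) *
              (((‖u s‖ : ℂ) * Complex.exp ((Complex.arg (u s) : ℂ) * Complex.I)) *
                ((‖Bfun h m a b t 0‖ : ℂ) *
                  Complex.exp ((Complex.arg (Bfun h m a b t 0) : ℂ) * Complex.I))) := by
            rw [habsW]
            push_cast
            ring
        _ = (P : ℂ) * (starRingEnd ℂ) (zc s) * (u s * Bfun h m a b t 0) := by
            rw [← hconj, Complex.norm_mul_exp_arg_mul_I, Complex.norm_mul_exp_arg_mul_I]
        _ = Gt f a b t (zc s) := by rw [← hWz, hGtz]; ring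
    rw [mul_comm]
    exact key.symm
  · -- the total variation
    have hper : zc (2 * π) = zc 0 := by
      have := periodic_circleMap 0 ε 0
      simpa [hzc] using this
    have hu2 : u (2 * π) = u 0 := by
      rw [hu]
      simp only [hper]
    show (-(2 * π) + Complex.arg (u (2 * π)) + Complex.arg (Bfun h m a b t 0)) -
        (-(0 : ℝ) + Complex.arg (u 0) + Complex.arg (Bfun h m a b t 0)) = 2 * π * (-1 : ℝ)
    rw [hu2]
    ring
end
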